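/- arXiv:2302.04209 — 2 statements merged into one kernel-verified Lean document; each statement's English description precedes it below -/
import Mathlib

section
/- Let P ∈ ℝ[x,y] have degree d ≥ 1 with P_x ≠ 0 and P_y ≠ 0, and let Q ∈ ℝ[x,y]. Then for every integer j ≥ 1 there exist polynomials Q_{xj}, Q_{yj} ∈ ℝ[x,y] such that, in the field ℝ(x,y) of rational functions, L_x^j Q = Q_{xj}/P_y^{2j−1} and L_y^j Q = Q_{yj}/P_x^{2j−1}, with deg Q_{xj} ≤ deg Q + 2dj and deg Q_{yj} ≤ deg Q + 2dj. -/
open MvPolynomial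

/-- The field `ℝ(x,y)` of rational functions in two variables. -/
abbrev RatFunc2 : Type := FractionRing (MvPolynomial (Fin 2) ℝ)

/-- The inclusion `ℝ[x,y] → ℝ(x,y)`. -/
noncomputable def toRF : MvPolynomial (Fin 2) ℝ →+* RatFunc2 :=
  algebraMap (MvPolynomial (Fin 2) ℝ) RatFunc2

lemma totalDegree_pderiv_le' {σ : Type*} [DecidableEq σ] (i : σ) (p : MvPolynomial σ ℝ) :
    (pderiv i p).totalDegree ≤ p.totalDegree - 1 := by
  conv_lhs => rw [p.as_sum, map_sum]
  refine (totalDegree_finset_sum _ _).trans (Finset.sup_le fun v hv => ?_)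
  rw [pderiv_monomial]
  by_cases h : v i = 0
  · simp [h]
  · refine (totalDegree_monomial_le _ _).trans ?_
    simp only [Function.id_def]
    have h1 : Finsupp.single i 1 ≤ v := by
      rw [Finsupp.single_le_iff]; omega
    have hs : v = (v - Finsupp.single i 1) + Finsupp.single i 1 :=
      (tsub_add_cancel_of_le h1).symm
    have hv' : v.sum (fun _ e => e) ≤ p.totalDegree := le_totalDegree hv
    have : v.sum (fun _ e => e) =
        (v - Finsupp.single i 1).sum (fun _ e => e) + 1 := by
      conv_lhs => rw [hs]
      rw [Finsupp.sum_add_index' (fun _ => rfl) (fun _ _ _ => rfl)]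
      simp [Finsupp.sum_single_index]
    omega

lemma toRF_injective : Function.Injective toRF :=
  IsFractionRing.injective (MvPolynomial (Fin 2) ℝ) RatFunc2

lemma toRF_ne_zero {q : MvPolynomial (Fin 2) ℝ} (h : q ≠ 0) : toRF q ≠ 0 :=
  fun h0 => h (toRF_injective (by simpa using h0))

lemma helper (P : MvPolynomial (Fin 2) ℝ) (d : ℕ) (hd : d = P.totalDegree) (hd1 : 1 ≤ d)
    (i k : Fin 2) (hP : pderiv k P ≠ 0)
    (D : RatFunc2 → RatFunc2)
    (hMul : ∀ a b, D (a * b) = a * D b + D a * b)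
    (hD : ∀ q : MvPolynomial (Fin 2) ℝ,
      D (toRF q) = toRF (pderiv i q) -
        (toRF (pderiv i P) / toRF (pderiv k P)) * toRF (pderiv k q))
    (Q : MvPolynomial (Fin 2) ℝ) :
    ∀ j : ℕ, 1 ≤ j →
      ∃ R : MvPolynomial (Fin 2) ℝ,
        D^[j] (toRF Q) = toRF R / (toRF (pderiv k P)) ^ (2 * j - 1) ∧
        R.totalDegree ≤ Q.totalDegree + 2 * d * j := by
  set g := pderiv k P with hg
  set u := toRF g with hu'
  have hu : u ≠ 0 := toRF_ne_zero hP
  set A : MvPolynomial (Fin 2) ℝ → MvPolynomial (Fin 2) ℝ :=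
    fun q => g * pderiv i q - pderiv i P * pderiv k q with hA
  have hDA : ∀ q, D (toRF q) = toRF (A q) / u := by
    intro q
    rw [hD q, hA]
    simp only [map_sub, map_mul]
    field_simp
    ring
  have hdegP : ∀ l : Fin 2, (pderiv l P).totalDegree ≤ d - 1 := by
    intro l; rw [hd]; exact totalDegree_pderiv_le' l P
  have hdegA : ∀ q : MvPolynomial (Fin 2) ℝ,
      (A q).totalDegree ≤ (d - 1) + q.totalDegree := by
    intro q
    rw [hA]
    refine (totalDegree_sub _ _).trans ?_
    have h1 : (g * pderiv i q).totalDegree ≤ (d - 1) + q.totalDegree :=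
      (totalDegree_mul _ _).trans (add_le_add (hdegP k)
        ((totalDegree_pderiv_le' i q).trans (Nat.sub_le _ _)))
    have h2 : (pderiv i P * pderiv k q).totalDegree ≤ (d - 1) + q.totalDegree :=
      (totalDegree_mul _ _).trans (add_le_add (hdegP i)
        ((totalDegree_pderiv_le' k q).trans (Nat.sub_le _ _)))
    exact max_le h1 h2
  have hD1 : D 1 = 0 := by
    have := hMul 1 1
    simp only [mul_one, one_mul] at this
    exact (left_eq_add.mp this)
  have hDinv : ∀ w : RatFunc2, w ≠ 0 → D w⁻¹ = -(D w) / w ^ 2 := by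
    intro w hw
    have h1 : w * w⁻¹ = 1 := mul_inv_cancel₀ hw
    have h2 := hMul w w⁻¹
    rw [h1, hD1] at h2
    have h3 : w * D w⁻¹ = -(D w * w⁻¹) := by linear_combination -h2
    rw [eq_div_iff (pow_ne_zero 2 hw), sq]
    calc D w⁻¹ * (w * w) = (w * D w⁻¹) * w := by ring
    _ = -(D w * w⁻¹) * w := by rw [h3]
    _ = -(D w * (w⁻¹ * w)) := by ring
    _ = -(D w) := by rw [inv_mul_cancel₀ hw, mul_one]
  intro j hj
  induction j with
  | zero => omega
  | succ j ih =>
    rcases Nat.eq_or_lt_of_le hj with h1 | h1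
    · have hj0 : j = 0 := by omega
      subst hj0
      refine ⟨A Q, ?_, ?_⟩
      · simpa using (hDA Q)
      · exact (hdegA Q).trans (by omega)
    · obtain ⟨R, hR, hRdeg⟩ := ih (by omega)
      set m : ℕ := 2 * j - 1 with hm
      have hm1 : 1 ≤ m := by omega
      have hpow : g * A (g ^ m) = (m : MvPolynomial (Fin 2) ℝ) * g ^ m * A g := by
        obtain ⟨n, hn⟩ : ∃ n, m = n + 1 := ⟨m - 1, by omega⟩
        rw [hn]
        simp only [hA, pderiv_pow, Nat.add_sub_cancel]
        push_cast
        rw [show (g : MvPolynomial (Fin 2) ℝ) ^ (n + 1) = g ^ n * g from pow_succ g n]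
        ring
      set R' : MvPolynomial (Fin 2) ℝ :=
        g * A R - (m : MvPolynomial (Fin 2) ℝ) * (R * A g) with hR'
      refine ⟨R', ?_, ?_⟩
      · rw [Function.iterate_succ_apply', hR, hm]
        have hw : u ^ m ≠ 0 := pow_ne_zero _ hu
        have hDum : D (u ^ m) = toRF (A (g ^ m)) / u := by
          rw [hu', ← map_pow]; exact hDA _
        have step : D (toRF R / u ^ m)
            = toRF R * (-(toRF (A (g ^ m)) / u) / (u ^ m) ^ 2)
              + (toRF (A R) / u) * (u ^ m)⁻¹ := by
          rw [div_eq_mul_inv, hMul, hDinv _ hw, hDum, hDA R]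
        rw [step]
        have hexp : 2 * (j + 1) - 1 = m + 2 := by omega
        rw [hexp]
        have hpowRF : u * toRF (A (g ^ m)) = (m : RatFunc2) * u ^ m * toRF (A g) := by
          have := congrArg toRF hpow
          simpa [map_mul, map_pow, map_natCast] using this
        have hR'RF : toRF R' = u * toRF (A R) - (m : RatFunc2) * (toRF R * toRF (A g)) := by
          rw [hR']; simp [map_sub, map_mul, map_natCast, hu']
        have hsub : toRF (A (g ^ m)) = ((m : RatFunc2) * u ^ m * toRF (A g)) / u := by
          rw [eq_div_iff hu]; linear_combination hpowRF
        rw [hR'RF, hsub]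
        field_simp
        ring
      · have hdegR' : R'.totalDegree ≤ R.totalDegree + 2 * d := by
          rw [hR']
          refine (totalDegree_sub _ _).trans (max_le ?_ ?_)
          · refine (totalDegree_mul _ _).trans ?_
            have h1 := (hdegA R)
            have h2 : g.totalDegree ≤ d - 1 := hdegP k
            omega
          · refine (totalDegree_mul _ _).trans ?_
            have h2 : ((m : MvPolynomial (Fin 2) ℝ)).totalDegree = 0 := by
              simpa using totalDegree_C (σ := Fin 2) ((m : ℝ))
            have h3 : (R * A g).totalDegree ≤ R.totalDegree + 2 * d := by
              refine (totalDegree_mul _ _).trans ?_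
              have h4 := hdegA g
              have h5 : g.totalDegree ≤ d - 1 := hdegP k
              omega
            omega
        have h6 : R.totalDegree + 2 * d ≤ Q.totalDegree + 2 * d * (j + 1) := by
          have := hRdeg
          have : 2 * d * (j + 1) = 2 * d * j + 2 * d := by ring
          omega
        omega

theorem iterated_Lx_Ly_denominator_and_degree_bound
    (P : MvPolynomial (Fin 2) ℝ) (d : ℕ) (hd : d = P.totalDegree) (hd1 : 1 ≤ d)
    (hPx : pderiv 0 P ≠ 0) (hPy : pderiv 1 P ≠ 0)
    (Q : MvPolynomial (Fin 2) ℝ)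
    (Dx Dy : RatFunc2 → RatFunc2)
    -- `Dx` and `Dy` are derivations of `ℝ(x,y)` …
    (hDxAdd : ∀ a b, Dx (a + b) = Dx a + Dx b)
    (hDxMul : ∀ a b, Dx (a * b) = a * Dx b + Dx a * b)
    (hDyAdd : ∀ a b, Dy (a + b) = Dy a + Dy b)
    (hDyMul : ∀ a b, Dy (a * b) = a * Dy b + Dy a * b)
    -- … which act on polynomials as `L_x = ∂/∂x - (P_x/P_y) ∂/∂y` and
    -- `L_y = ∂/∂y - (P_y/P_x) ∂/∂x` respectively:
    (hDx : ∀ q : MvPolynomial (Fin 2) ℝ,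
      Dx (toRF q) = toRF (pderiv 0 q) -
        (toRF (pderiv 0 P) / toRF (pderiv 1 P)) * toRF (pderiv 1 q))
    (hDy : ∀ q : MvPolynomial (Fin 2) ℝ,
      Dy (toRF q) = toRF (pderiv 1 q) -
        (toRF (pderiv 1 P) / toRF (pderiv 0 P)) * toRF (pderiv 0 q)) :
    ∀ j : ℕ, 1 ≤ j →
      ∃ Qxj Qyj : MvPolynomial (Fin 2) ℝ,
        Dx^[j] (toRF Q) = toRF Qxj / (toRF (pderiv 1 P)) ^ (2 * j - 1) ∧
        Qxj.totalDegree ≤ Q.totalDegree + 2 * d * j ∧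
        Dy^[j] (toRF Q) = toRF Qyj / (toRF (pderiv 0 P)) ^ (2 * j - 1) ∧
        Qyj.totalDegree ≤ Q.totalDegree + 2 * d * j := by
  intro j hj
  obtain ⟨Qxj, hx1, hx2⟩ := helper P d hd hd1 0 1 hPy Dx hDxMul hDx Q j hj
  obtain ⟨Qyj, hy1, hy2⟩ := helper P d hd hd1 1 0 hPx Dy hDyMul hDy Q j hj
  exact ⟨Qxj, Qyj, hx1, hx2, hy1, hy2⟩
end

section
/- (Pólya's theorem) Let a < b be reals and let f_1,…,f_μ : (a,b) → ℝ be real analytic functions. For j = 1,…,μ let W_j : (a,b) → ℝ be the partial Wronskian W_j = det((f_m)^{(i−1)})_{1≤i,m≤j}, and suppose that W_j(t) ≠ 0 for all t ∈ (a,b) and all j = 1,…,μ. Then for every (c_1,…,c_μ) ∈ ℝ^μ with not all c_i zero, the function c_1 f_1 + ⋯ + c_μ f_μ has at most μ − 1 zeros in (a,b). -/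
open Finset Filter Topology Matrix Set

lemma analytic_iteratedDeriv {f : ℝ → ℝ} {s : Set ℝ} (h : AnalyticOnNhd ℝ f s) (n : ℕ) :
    AnalyticOnNhd ℝ (iteratedDeriv n f) s := by
  rw [iteratedDeriv_eq_iterate]
  exact h.iterated_deriv n

lemma leibniz_key (n : ℕ) (A B : ℕ → ℝ) :
    (∑ k ∈ range (n+1), (n.choose k : ℝ) * (A (k+1) * B (n-k))) +
      (∑ k ∈ range (n+1), (n.choose k : ℝ) * (A k * B (n-k+1))) =
      ∑ k ∈ range (n+2), ((n+1).choose k : ℝ) * A k * B (n+1-k) := by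
  rw [Finset.sum_range_succ' _ (n+1)]
  have h1 : ∀ k ∈ range (n+1), ((n+1).choose (k+1) : ℝ) * A (k+1) * B (n+1-(k+1)) =
      (n.choose k : ℝ) * (A (k+1) * B (n-k)) + (n.choose (k+1) : ℝ) * (A (k+1) * B (n-k)) := by
    intro k hk
    rw [Nat.choose_succ_succ, Nat.succ_sub_succ]
    push_cast
    ring
  rw [Finset.sum_congr rfl h1, Finset.sum_add_distrib]
  have h2 : (∑ k ∈ range (n+1), (n.choose k : ℝ) * (A k * B (n-k+1))) =
      (∑ k ∈ range n, (n.choose (k+1) : ℝ) * (A (k+1) * B (n-k))) + A 0 * B (n+1) := by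
    rw [Finset.sum_range_succ' _ n]
    congr 1
    · refine Finset.sum_congr rfl fun k hk => ?_
      rw [Finset.mem_range] at hk
      have : n - (k+1) + 1 = n - k := by omega
      rw [this]
    · simp
  have h3 : (∑ k ∈ range (n+1), (n.choose (k+1) : ℝ) * (A (k+1) * B (n-k))) =
      ∑ k ∈ range n, (n.choose (k+1) : ℝ) * (A (k+1) * B (n-k)) := by
    rw [Finset.sum_range_succ]
    simp
  rw [h2, h3]
  simp [Nat.choose_succ_self]
  ring

lemma iteratedDeriv_mul_analytic {u v : ℝ → ℝ} {s : Set ℝ} (hs : IsOpen s)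
    (hu : AnalyticOnNhd ℝ u s) (hv : AnalyticOnNhd ℝ v s) (n : ℕ) :
    ∀ x ∈ s, iteratedDeriv n (fun t => u t * v t) x =
      ∑ k ∈ Finset.range (n+1),
        (n.choose k : ℝ) * iteratedDeriv k u x * iteratedDeriv (n-k) v x := by
  induction n with
  | zero => intro x hx; simp
  | succ n ih =>
    intro x hx
    have hmem : s ∈ 𝓝 x := hs.mem_nhds hx
    have heq : iteratedDeriv n (fun t => u t * v t) =ᶠ[𝓝 x]
        fun t => ∑ k ∈ Finset.range (n+1),
          (n.choose k : ℝ) * iteratedDeriv k u t * iteratedDeriv (n-k) v t :=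
      Filter.eventuallyEq_of_mem hmem fun t ht => ih t ht
    have hd : ∀ (m : ℕ) (g : ℝ → ℝ), AnalyticOnNhd ℝ g s →
        DifferentiableAt ℝ (iteratedDeriv m g) x :=
      fun m g hg => ((analytic_iteratedDeriv hg m) x hx).differentiableAt
    rw [iteratedDeriv_succ, heq.deriv_eq, deriv_fun_sum (fun k _ =>
      (show DifferentiableAt ℝ (fun t => (n.choose k : ℝ) * iteratedDeriv k u t * iteratedDeriv (n-k) v t) x from
      (((hd k u hu).const_mul _).mul (hd (n-k) v hv))))]
    have hterm : ∀ k ∈ Finset.range (n+1),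
        deriv (fun t => (n.choose k : ℝ) * iteratedDeriv k u t * iteratedDeriv (n-k) v t) x =
        (n.choose k : ℝ) * (iteratedDeriv (k+1) u x * iteratedDeriv (n-k) v x) +
        (n.choose k : ℝ) * (iteratedDeriv k u x * iteratedDeriv (n-k+1) v x) := by
      intro k _
      have : (fun t => (n.choose k : ℝ) * iteratedDeriv k u t * iteratedDeriv (n-k) v t)
          = fun t => (n.choose k : ℝ) * (iteratedDeriv k u t * iteratedDeriv (n-k) v t) := by
        funext t; ring
      rw [this, deriv_const_mul _ (show DifferentiableAt ℝ (fun t => iteratedDeriv k u t * iteratedDeriv (n-k) v t) x from (hd k u hu).mul (hd (n-k) v hv)),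
        deriv_fun_mul (hd k u hu) (hd (n-k) v hv), iteratedDeriv_succ, iteratedDeriv_succ]
      ring
    rw [Finset.sum_congr rfl hterm, Finset.sum_add_distrib]
    have := leibniz_key n (fun k => iteratedDeriv k u x) (fun k => iteratedDeriv k v x)
    simpa using this

lemma wronskian_smul {n : ℕ} {u : ℝ → ℝ} {v : Fin n → ℝ → ℝ} {s : Set ℝ} (hs : IsOpen s)
    (hu : AnalyticOnNhd ℝ u s) (hv : ∀ m, AnalyticOnNhd ℝ (v m) s) {x : ℝ} (hx : x ∈ s) :
    Matrix.det (Matrix.of fun i m : Fin n => iteratedDeriv (i:ℕ) (fun t => u t * v m t) x) =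
      u x ^ n * Matrix.det (Matrix.of fun i m : Fin n => iteratedDeriv (i:ℕ) (v m) x) := by
  classical
  set L : Matrix (Fin n) (Fin n) ℝ := Matrix.of fun i k : Fin n =>
    if (k:ℕ) ≤ (i:ℕ) then (((i:ℕ)).choose k : ℝ) * iteratedDeriv ((i:ℕ)-(k:ℕ)) u x else 0
    with hLdef
  have hfact : (Matrix.of fun i m : Fin n => iteratedDeriv (i:ℕ) (fun t => u t * v m t) x)
      = L * Matrix.of (fun i m : Fin n => iteratedDeriv (i:ℕ) (v m) x) := by
    ext i m
    rw [Matrix.mul_apply]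
    have hcomm : (fun t => u t * v m t) = fun t => v m t * u t := by
      funext t; ring
    rw [Matrix.of_apply, hcomm, iteratedDeriv_mul_analytic hs (hv m) hu (i:ℕ) x hx]
    have hsum : ∀ k : Fin n, L i k * (Matrix.of fun i m : Fin n => iteratedDeriv (i:ℕ) (v m) x) k m
        = if (k:ℕ) ≤ (i:ℕ) then
            (((i:ℕ)).choose k : ℝ) * iteratedDeriv (k:ℕ) (v m) x * iteratedDeriv ((i:ℕ)-(k:ℕ)) u x
          else 0 := by
      intro k
      simp only [hLdef, Matrix.of_apply]
      split_ifs with h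
      · ring
      · simp
    rw [Finset.sum_congr rfl fun k _ => hsum k]
    have hconv : ∑ k : Fin n, (if (k:ℕ) ≤ (i:ℕ) then
        (((i:ℕ)).choose k : ℝ) * iteratedDeriv (k:ℕ) (v m) x * iteratedDeriv ((i:ℕ)-(k:ℕ)) u x
        else 0)
        = ∑ k ∈ Finset.range n, (if k ≤ (i:ℕ) then
        (((i:ℕ)).choose k : ℝ) * iteratedDeriv k (v m) x * iteratedDeriv ((i:ℕ)-k) u x else 0) :=
      Fin.sum_univ_eq_sum_range (fun k => if k ≤ (i:ℕ) then
        (((i:ℕ)).choose k : ℝ) * iteratedDeriv k (v m) x * iteratedDeriv ((i:ℕ)-k) u x else 0) n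
    rw [hconv]
    rw [← Finset.sum_subset (Finset.range_subset_range.2 (Nat.succ_le_of_lt i.isLt))
      (fun k hk hk2 => if_neg (by simp only [Finset.mem_range] at hk hk2; omega))]
    refine Finset.sum_congr rfl fun k hk => ?_
    rw [Finset.mem_range] at hk
    rw [if_pos (by omega)]
  have hLtri : L.BlockTriangular OrderDual.toDual := by
    intro i j hij
    have : (i:ℕ) < (j:ℕ) := hij
    simp only [hLdef, Matrix.of_apply]
    rw [if_neg (by omega)]
  rw [hfact, Matrix.det_mul, Matrix.det_of_lowerTriangular L hLtri]
  congr 1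
  have : ∀ i : Fin n, L i i = u x := by
    intro i
    simp [hLdef, Nat.choose_self]
  rw [Finset.prod_congr rfl fun i _ => this i]
  simp

lemma iteratedDeriv_const'' (n : ℕ) (c : ℝ) :
    iteratedDeriv n (fun _ : ℝ => c) = fun _ => if n = 0 then c else 0 := by
  induction n generalizing c with
  | zero => simp
  | succ n ih =>
    rw [iteratedDeriv_succ', deriv_const']
    rw [ih 0]
    simp

lemma wronskian_transfer {n : ℕ} {f : Fin (n+1) → ℝ → ℝ} {s : Set ℝ} (hs : IsOpen s)
    (hf : ∀ m, AnalyticOnNhd ℝ (f m) s) (hf0 : ∀ x ∈ s, f 0 x ≠ 0) {x : ℝ} (hx : x ∈ s) :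
    Matrix.det (Matrix.of fun i m : Fin (n+1) => iteratedDeriv (i:ℕ) (f m) x) =
      f 0 x ^ (n+1) * Matrix.det (Matrix.of fun i m : Fin n =>
        iteratedDeriv (i:ℕ) (deriv (fun t => f m.succ t / f 0 t)) x) := by
  classical
  set q : Fin (n+1) → ℝ → ℝ := fun m t => f m t / f 0 t with hqdef
  have hqa : ∀ m, AnalyticOnNhd ℝ (q m) s :=
    fun m y hy => ((hf m y hy).div (hf 0 y hy) (hf0 y hy))
  have h1 : ∀ m, Set.EqOn (f m) (fun t => f 0 t * q m t) s := by
    intro m t ht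
    simp only [hqdef]
    rw [mul_div_cancel₀ _ (hf0 t ht)]
  have step1 : (Matrix.of fun i m : Fin (n+1) => iteratedDeriv (i:ℕ) (f m) x)
      = Matrix.of fun i m : Fin (n+1) => iteratedDeriv (i:ℕ) (fun t => f 0 t * q m t) x := by
    ext i m
    exact ((h1 m).iteratedDeriv_of_isOpen hs (i:ℕ)) hx
  rw [step1, wronskian_smul hs (hf 0) hqa hx]
  congr 1
  -- now expand the determinant of the q-matrix along column 0
  set A : Matrix (Fin (n+1)) (Fin (n+1)) ℝ :=
    Matrix.of fun i m : Fin (n+1) => iteratedDeriv (i:ℕ) (q m) x with hAdef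
  have hq0 : Set.EqOn (q 0) (fun _ => (1:ℝ)) s := by
    intro t ht
    simp only [hqdef]
    rw [div_self (hf0 t ht)]
  have hcol : ∀ i : Fin (n+1), A i 0 = if (i:ℕ) = 0 then 1 else 0 := by
    intro i
    have := (hq0.iteratedDeriv_of_isOpen hs (i:ℕ)) hx
    simp only [hAdef, Matrix.of_apply]
    rw [this, iteratedDeriv_const'' (i:ℕ) 1]
  rw [Matrix.det_succ_column_zero]
  rw [Finset.sum_eq_single 0 (by
    intro i _ hi
    rw [hcol i, if_neg (by intro h; exact hi (Fin.ext (by simp [h])))]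
    ring)
    (by intro h; exact absurd (Finset.mem_univ 0) h)]
  rw [Fin.succAbove_zero]
  have hsub : (A.submatrix Fin.succ Fin.succ) = Matrix.of fun i m : Fin n =>
      iteratedDeriv (i:ℕ) (deriv (fun t => f m.succ t / f 0 t)) x := by
    ext i m
    simp only [Matrix.submatrix_apply, hAdef, Matrix.of_apply, Fin.val_succ]
    rw [iteratedDeriv_succ']
  have hA0 : A 0 0 = 1 := by rw [hcol]; simp
  rw [hsub, hA0]
  simp

lemma polya_core (μ : ℕ) : ∀ (a b : ℝ) (f : Fin μ → ℝ → ℝ),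
    (∀ m, AnalyticOnNhd ℝ (f m) (Set.Ioo a b)) →
    (∀ j : ℕ, 1 ≤ j → ∀ hj : j ≤ μ, ∀ t ∈ Set.Ioo a b,
      Matrix.det (Matrix.of fun i m : Fin j =>
        iteratedDeriv (i : ℕ) (f (Fin.castLE hj m)) t) ≠ 0) →
    ∀ c : Fin μ → ℝ, c ≠ 0 → ∀ S : Finset ℝ,
    (∀ t ∈ S, t ∈ Set.Ioo a b ∧ ∑ m, c m * f m t = 0) → S.card ≤ μ - 1 := by
  induction μ with
  | zero =>
    intro a b f _ _ c hc
    exact absurd (Subsingleton.elim c 0) hc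
  | succ μ ih =>
    intro a b f hanal hW c hc S hS
    classical
    have hopen : IsOpen (Set.Ioo a b) := isOpen_Ioo
    -- f 0 never vanishes on (a,b)
    have hf0 : ∀ t ∈ Set.Ioo a b, f 0 t ≠ 0 := by
      intro t ht
      have := hW 1 le_rfl (Nat.succ_le_succ (Nat.zero_le μ)) t ht
      rw [Matrix.det_fin_one] at this
      simpa using this
    by_cases hall : ∀ m : Fin μ, c m.succ = 0
    · -- only c 0 nonzero : no zeros at all
      have hc0 : c 0 ≠ 0 := by
        intro h0
        apply hc
        funext m
        induction m using Fin.cases with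
        | zero => exact h0
        | succ m => exact hall m
      have : S = ∅ := by
        apply Finset.eq_empty_of_forall_notMem
        intro t ht
        obtain ⟨htI, hsum⟩ := hS t ht
        rw [Fin.sum_univ_succ] at hsum
        simp only [hall, zero_mul, Finset.sum_const_zero, add_zero] at hsum
        exact (mul_ne_zero hc0 (hf0 t htI)) hsum
      simp [this]
    · push_neg at hall
      obtain ⟨m0, hm0⟩ := hall
      have hμpos : 0 < μ := m0.pos
      -- the reduced system
      set q : Fin μ → ℝ → ℝ := fun m t => f m.succ t / f 0 t with hqdef
      have hqa : ∀ m, AnalyticOnNhd ℝ (q m) (Set.Ioo a b) :=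
        fun m t ht => ((hanal m.succ t ht).div (hanal 0 t ht) (hf0 t ht))
      set F : Fin μ → ℝ → ℝ := fun m => deriv (q m) with hFdef
      have hFa : ∀ m, AnalyticOnNhd ℝ (F m) (Set.Ioo a b) :=
        fun m => (hqa m).deriv_of_isOpen hopen
      -- Wronskians of the reduced system do not vanish
      have hFW : ∀ j : ℕ, 1 ≤ j → ∀ hj : j ≤ μ, ∀ t ∈ Set.Ioo a b,
          Matrix.det (Matrix.of fun i m : Fin j =>
            iteratedDeriv (i : ℕ) (F (Fin.castLE hj m)) t) ≠ 0 := by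
        intro j h1 hj t ht
        have hj' : j + 1 ≤ μ + 1 := Nat.succ_le_succ hj
        have hWj := hW (j+1) (Nat.succ_le_succ (Nat.zero_le j)) hj' t ht
        have hcast0 : Fin.castLE hj' (0 : Fin (j+1)) = (0 : Fin (μ+1)) := rfl
        have htrans := wronskian_transfer (n := j) (f := fun m : Fin (j+1) => f (Fin.castLE hj' m))
          hopen (fun m => hanal _) (fun x hx => hf0 x hx) ht
        rw [htrans] at hWj
        have hsucc : ∀ m : Fin j, Fin.castLE hj' m.succ = (Fin.castLE hj m).succ := by
          intro m
          apply Fin.ext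
          simp
        have hmeq : (Matrix.of fun i m : Fin j =>
            iteratedDeriv (i:ℕ) (deriv (fun u => f (Fin.castLE hj' m.succ) u /
              f (Fin.castLE hj' 0) u)) t)
            = Matrix.of fun i m : Fin j =>
            iteratedDeriv (i : ℕ) (F (Fin.castLE hj m)) t := rfl
        rw [hmeq] at hWj
        intro h
        rw [h, mul_zero] at hWj
        exact hWj rfl
      set d : Fin μ → ℝ := fun m => c m.succ with hddef
      have hd : d ≠ 0 := by
        intro h
        exact hm0 (congrFun h m0)
      -- the quotient function H
      set g : ℝ → ℝ := fun t => ∑ m, c m * f m t with hgdef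
      have hga : AnalyticOnNhd ℝ g (Set.Ioo a b) := by
        intro t ht
        exact Finset.analyticAt_fun_sum _ (fun m _ => (analyticAt_const.mul (hanal m t ht)))
      set H : ℝ → ℝ := fun t => g t / f 0 t with hHdef
      have hHdiff : ∀ t ∈ Set.Ioo a b, DifferentiableAt ℝ H t :=
        fun t ht => ((hga t ht).div (hanal 0 t ht) (hf0 t ht)).differentiableAt
      have hHzero : ∀ t ∈ S, H t = 0 := by
        intro t ht
        simp only [hHdef, hgdef]
        rw [(hS t ht).2, zero_div]
      -- formula for deriv H on (a,b)
      have hHder : ∀ t ∈ Set.Ioo a b, deriv H t = ∑ m, d m * F m t := by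
        intro t ht
        have hloc : H =ᶠ[𝓝 t] fun u => c 0 + ∑ m : Fin μ, d m * q m u := by
          refine Filter.eventuallyEq_of_mem (hopen.mem_nhds ht) fun u hu => ?_
          simp only [hHdef, hgdef, hqdef, hddef]
          rw [Fin.sum_univ_succ, add_div, Finset.sum_div,
            mul_div_assoc, div_self (hf0 u hu), mul_one]
          congr 1
          refine Finset.sum_congr rfl fun m _ => ?_
          rw [mul_div_assoc]
        rw [hloc.deriv_eq, deriv_const_add]
        rw [deriv_fun_sum (fun m _ => ((hqa m t ht).differentiableAt.const_mul (d m)))]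
        refine Finset.sum_congr rfl fun m _ => ?_
        rw [deriv_const_mul _ (hqa m t ht).differentiableAt]
      -- suppose S.card > μ; derive a contradiction
      by_contra hcard
      push_neg at hcard
      have hcard' : μ + 1 ≤ S.card := by omega
      obtain ⟨S', hS'sub, hS'card⟩ := S.exists_subset_card_eq hcard'
      set e := S'.orderIsoOfFin hS'card with hedef
      have heIoo : ∀ i : Fin (μ+1), ((e i : ℝ)) ∈ Set.Ioo a b :=
        fun i => (hS _ (hS'sub (e i).2)).1
      have heH : ∀ i : Fin (μ+1), H (e i : ℝ) = 0 :=
        fun i => hHzero _ (hS'sub (e i).2)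
      have hemono : ∀ i j : Fin (μ+1), i < j → ((e i : ℝ)) < ((e j : ℝ)) := by
        intro i j hij
        exact Subtype.coe_lt_coe.2 (e.lt_iff_lt.2 hij)
      have key : ∀ m : Fin μ, ∃ z, ((e m.castSucc : ℝ) < z ∧ z < (e m.succ : ℝ)) ∧
          deriv H z = 0 := by
        intro m
        have hlt : ((e m.castSucc : ℝ)) < ((e m.succ : ℝ)) :=
          hemono _ _ Fin.castSucc_lt_succ
        have hsubI : Set.Icc ((e m.castSucc : ℝ)) ((e m.succ : ℝ)) ⊆ Set.Ioo a b := by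
          intro y hy
          exact ⟨lt_of_lt_of_le (heIoo m.castSucc).1 hy.1,
            lt_of_le_of_lt hy.2 (heIoo m.succ).2⟩
        have hcont : ContinuousOn H (Set.Icc ((e m.castSucc : ℝ)) ((e m.succ : ℝ))) :=
          fun y hy => ((hHdiff y (hsubI hy)).continuousAt).continuousWithinAt
        obtain ⟨z, hz1, hz2⟩ := exists_deriv_eq_zero hlt hcont
          ((heH m.castSucc).trans (heH m.succ).symm)
        exact ⟨z, ⟨hz1.1, hz1.2⟩, hz2⟩
      choose z hz hzder using key
      have hzmono : StrictMono z := by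
        intro m m' hmm
        have h1 : (z m) < (e m.succ : ℝ) := (hz m).2
        have h2 : ((e m'.castSucc : ℝ)) < z m' := (hz m').1
        have h3 : ((e m.succ : ℝ)) ≤ ((e m'.castSucc : ℝ)) := by
          rcases eq_or_lt_of_le (show m.succ ≤ m'.castSucc from
            Fin.castSucc_lt_iff_succ_le.mp (Fin.castSucc_lt_castSucc_iff.mpr hmm)) with h | h
          · rw [h]
          · exact le_of_lt (hemono _ _ h)
        linarith
      have hzIoo : ∀ m : Fin μ, z m ∈ Set.Ioo a b := by
        intro m
        exact ⟨lt_trans (heIoo m.castSucc).1 (hz m).1,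
          lt_trans (hz m).2 (heIoo m.succ).2⟩
      set T : Finset ℝ := Finset.image z Finset.univ with hTdef
      have hTcard : T.card = μ := by
        rw [hTdef, Finset.card_image_of_injective _ hzmono.injective, Finset.card_univ,
          Fintype.card_fin]
      have hTzero : ∀ t ∈ T, t ∈ Set.Ioo a b ∧ ∑ m, d m * F m t = 0 := by
        intro t ht
        rw [hTdef, Finset.mem_image] at ht
        obtain ⟨m, _, rfl⟩ := ht
        exact ⟨hzIoo m, by rw [← hHder _ (hzIoo m)]; exact hzder m⟩
      have := ih a b F hFa hFW d hd T hTzero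
      omega

theorem polya_chebyshev (μ : ℕ) (a b : ℝ) (hab : a < b)
    (f : Fin μ → ℝ → ℝ)
    (hanal : ∀ m, AnalyticOnNhd ℝ (f m) (Set.Ioo a b))
    (hW : ∀ j : ℕ, 1 ≤ j → ∀ hj : j ≤ μ, ∀ t ∈ Set.Ioo a b,
      Matrix.det (Matrix.of fun i m : Fin j =>
        iteratedDeriv (i : ℕ) (f (Fin.castLE hj m)) t) ≠ 0) :
    ∀ c : Fin μ → ℝ, c ≠ 0 →
      {t | t ∈ Set.Ioo a b ∧ ∑ m, c m * f m t = 0}.Finite ∧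
      {t | t ∈ Set.Ioo a b ∧ ∑ m, c m * f m t = 0}.ncard ≤ μ - 1 := by
  intro c hc
  classical
  have hμ : 1 ≤ μ := by
    by_contra h
    interval_cases μ
    exact hc (Subsingleton.elim c 0)
  set Z := {t | t ∈ Set.Ioo a b ∧ ∑ m, c m * f m t = 0} with hZdef
  have core := polya_core μ a b f hanal hW c hc
  have hfin : Z.Finite := by
    by_contra hinf
    have hinf' : Z.Infinite := hinf
    obtain ⟨T, hTsub, hTfin, hTcard⟩ := hinf'.exists_subset_ncard_eq μ
    have h1 : hTfin.toFinset.card = μ := by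
      rw [← Set.ncard_eq_toFinset_card T hTfin]
      exact hTcard
    have := core hTfin.toFinset (fun t ht => hTsub (hTfin.mem_toFinset.1 ht))
    omega
  refine ⟨hfin, ?_⟩
  rw [Set.ncard_eq_toFinset_card Z hfin]
  exact core hfin.toFinset (fun t ht => hfin.mem_toFinset.1 ht)
end
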